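/- (Multisection bound.) Let a : ℕ → ℍ and f : ℍ → ℍ satisfy the Bohr hypotheses. Then for every n ≥ 1 and every w ∈ ℍ with ‖w‖ < 1, the family (fun m => wᵐ · a (n·m)) is summable and ‖∑' m, wᵐ · a (n·m)‖ < 1. -/

import Mathlib

local notation "ℍ" => Quaternion ℝ

lemma coe_eq_smul_one (r : ℝ) : (r : ℍ) = r • (1 : ℍ) := by
  ext <;> simp [Quaternion.re_one, Quaternion.imI_one, Quaternion.imJ_one, Quaternion.imK_one]

noncomputable def sliceHom (J : ℍ) (hJ : J * J = -1) : ℂ →+* ℍ where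
  toFun z := (z.re : ℍ) + z.im • J
  map_one' := by simp
  map_zero' := by simp
  map_add' z w := by push_cast [Complex.add_re, Complex.add_im, add_smul]; abel
  map_mul' z w := by
    simp only [Complex.mul_re, Complex.mul_im, mul_add, add_mul,
      mul_smul_comm, smul_mul_assoc, Quaternion.coe_mul_eq_smul,
      Quaternion.mul_coe_eq_smul, hJ, smul_smul, coe_eq_smul_one, one_mul, mul_one]
    module

lemma J_re_zero (J : ℍ) (hJ : J * J = -1) :
    J.re = 0 ∧ J.imI^2 + J.imJ^2 + J.imK^2 = 1 := by
  have h1 : (J*J).re = -1 := by rw [hJ]; simp [Quaternion.re_one]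
  have h2 : Quaternion.normSq J = 1 := by
    have := congrArg Quaternion.normSq hJ
    rw [map_mul] at this
    simp at this
    nlinarith [Quaternion.normSq_nonneg (a := J)]
  rw [Quaternion.normSq_def'] at h2
  rw [Quaternion.re_mul] at h1
  constructor <;> nlinarith [sq_nonneg J.re]

lemma norm_slice (J : ℍ) (hJ : J * J = -1) (z : ℂ) :
    ‖(sliceHom J hJ) z‖ = ‖z‖ := by
  obtain ⟨hre, him⟩ := J_re_zero J hJ
  have h1 : ‖(sliceHom J hJ) z‖^2 = Quaternion.normSq ((sliceHom J hJ) z) := by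
    rw [Quaternion.normSq_eq_norm_mul_self]; ring
  have h2 : Quaternion.normSq ((sliceHom J hJ) z) = z.re^2 + z.im^2 := by
    show Quaternion.normSq ((z.re : ℍ) + z.im • J) = _
    rw [Quaternion.normSq_def']
    simp [hre]
    nlinarith [him]
  have h3 : ‖z‖^2 = z.re^2 + z.im^2 := by
    rw [Complex.sq_norm, Complex.normSq_apply]; ring
  rw [← sq_eq_sq₀ (norm_nonneg _) (norm_nonneg _)]
  rw [h1, h2, h3]

lemma exists_slice (w : ℍ) : ∃ (J : ℍ) (hJ : J * J = -1) (z : ℂ), (sliceHom J hJ) z = w := by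
  set s : ℝ := Real.sqrt (w.imI^2 + w.imJ^2 + w.imK^2) with hs
  have hsum : s^2 = w.imI^2 + w.imJ^2 + w.imK^2 := Real.sq_sqrt (by positivity)
  by_cases h0 : s = 0
  · have hz : w.imI = 0 ∧ w.imJ = 0 ∧ w.imK = 0 := by
      rw [h0] at hsum
      refine ⟨?_, ?_, ?_⟩ <;> nlinarith [sq_nonneg w.imI, sq_nonneg w.imJ, sq_nonneg w.imK]
    refine ⟨⟨0,1,0,0⟩, ?_, (w.re : ℂ), ?_⟩
    · show (⟨0,1,0,0⟩ : ℍ) * ⟨0,1,0,0⟩ = -1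
      ext <;> simp [Quaternion.re_mul, Quaternion.imI_mul, Quaternion.imJ_mul, Quaternion.imK_mul, QuaternionAlgebra.mk_mul_mk, Quaternion.re_one, Quaternion.imI_one, Quaternion.imJ_one, Quaternion.imK_one]
    · show ((w.re : ℂ).re : ℍ) + (w.re : ℂ).im • _ = w
      ext <;> simp [hz.1, hz.2.1, hz.2.2] <;> exact zero_mul _
  · have hspos : 0 < s := lt_of_le_of_ne (Real.sqrt_nonneg _) (Ne.symm h0)
    refine ⟨⟨0, w.imI/s, w.imJ/s, w.imK/s⟩, ?_, ⟨w.re, s⟩, ?_⟩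
    · show (⟨0, w.imI/s, w.imJ/s, w.imK/s⟩ : ℍ) * (⟨0, w.imI/s, w.imJ/s, w.imK/s⟩ : ℍ) = -1
      ext <;> simp [Quaternion.re_mul, Quaternion.imI_mul, Quaternion.imJ_mul, Quaternion.imK_mul, QuaternionAlgebra.mk_mul_mk, Quaternion.re_one, Quaternion.imI_one, Quaternion.imJ_one, Quaternion.imK_one]
      · field_simp
        nlinarith [hsum]
      all_goals ring
    · show ((⟨w.re, s⟩ : ℂ).re : ℍ) + (⟨w.re, s⟩ : ℂ).im • _ = w
      ext <;> simp
      · exact mul_zero s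
      all_goals exact mul_div_cancel₀ _ h0

lemma sum_root_pow (n : ℕ) (hn : 1 ≤ n) (m : ℕ) :
    ∑ k ∈ Finset.range n, Complex.exp (2 * Real.pi * Complex.I / n) ^ (k * m)
      = if n ∣ m then (n : ℂ) else 0 := by
  have hn0 : n ≠ 0 := by omega
  have prim := Complex.isPrimitiveRoot_exp n hn0
  set e := Complex.exp (2 * Real.pi * Complex.I / n)
  simp_rw [mul_comm, pow_mul]
  by_cases hd : n ∣ m
  · rw [if_pos hd]
    have : e ^ m = 1 := (prim.pow_eq_one_iff_dvd m).2 hd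
    simp [this]
  · rw [if_neg hd]
    have hne : e ^ m ≠ 1 := fun h => hd ((prim.pow_eq_one_iff_dvd m).1 h)
    have hpow : (e ^ m) ^ n = 1 := by
      rw [← pow_mul, mul_comm, pow_mul, prim.pow_eq_one, one_pow]
    rw [geom_sum_eq hne, hpow]
    simp

/-- `(f, a)` satisfies the Bohr hypotheses: `f` is continuous on the closed unit ball,
agrees with the power series `∑ qⁿ · a n` on the open unit ball, and `‖f‖ < 1` on the
closed unit ball. -/
def BohrHypotheses (f : ℍ → ℍ) (a : ℕ → ℍ) : Prop :=
  ContinuousOn f {q : ℍ | ‖q‖ ≤ 1} ∧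
  (∀ q : ℍ, ‖q‖ < 1 → HasSum (fun n => q ^ n * a n) (f q)) ∧
  (∀ q : ℍ, ‖q‖ ≤ 1 → ‖f q‖ < 1)

/-- Multisection bound: the multisection `Φ(w) = ∑' m, wᵐ · a (n·m)` of `f` again maps
the open unit ball into itself. -/
theorem multisection_bound
    (a : ℕ → ℍ) (f : ℍ → ℍ)
    (hBohr : BohrHypotheses f a) :
    ∀ n : ℕ, 1 ≤ n → ∀ w : ℍ, ‖w‖ < 1 →
      Summable (fun m => w ^ m * a (n * m)) ∧
      ‖∑' m, w ^ m * a (n * m)‖ < 1 := by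
  obtain ⟨-, hsum, hlt⟩ := hBohr
  intro n hn w hw
  have hn0 : (n : ℝ) ≠ 0 := Nat.cast_ne_zero.2 (by omega)
  have hnH : ((n : ℕ) : ℍ) ≠ 0 := by
    have := Quaternion.coe_injective.ne hn0
    rwa [Quaternion.coe_natCast, Quaternion.coe_zero] at this
  obtain ⟨J, hJ, z, hz⟩ := exists_slice w
  obtain ⟨c, hc⟩ := IsAlgClosed.exists_pow_nat_eq z (show 0 < n from hn)
  set φ := sliceHom J hJ with hφ
  set e : ℂ := Complex.exp (2 * Real.pi * Complex.I / n) with he_def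
  have he : ‖e‖ = 1 := by
    simp [he_def, Complex.norm_exp]
  -- ‖c‖ < 1
  have hcn : ‖c‖ ^ n = ‖w‖ := by
    rw [← norm_pow, hc, ← hz, norm_slice]
  have hclt : ‖c‖ < 1 := by
    by_contra hge
    push_neg at hge
    have : (1 : ℝ) ≤ ‖c‖ ^ n := one_le_pow₀ hge
    rw [hcn] at this; linarith
  -- the pointwise sums
  have key : ∀ k : ℕ, HasSum (fun m => φ ((e ^ k * c) ^ m) * a m) (f (φ (e ^ k * c))) := by
    intro k
    have hnorm : ‖φ (e ^ k * c)‖ < 1 := by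
      rw [hφ, norm_slice, norm_mul, norm_pow, he, one_pow, one_mul]
      exact hclt
    have h2 : (fun m => φ ((e ^ k * c) ^ m) * a m)
        = fun m => (φ (e ^ k * c)) ^ m * a m := funext fun m => by rw [map_pow]
    rw [h2]
    exact hsum _ hnorm
  set S : ℍ := ∑ k ∈ Finset.range n, f (φ (e ^ k * c)) with hS
  have total : HasSum (fun m => ∑ k ∈ Finset.range n, φ ((e ^ k * c) ^ m) * a m) S :=
    hasSum_sum fun k _ => key k
  have inner : ∀ m, (∑ k ∈ Finset.range n, φ ((e ^ k * c) ^ m) * a m)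
      = (n : ℍ) * (if n ∣ m then φ (c ^ m) * a m else 0) := by
    intro m
    rw [← Finset.sum_mul]
    have h1 : ∑ k ∈ Finset.range n, φ ((e ^ k * c) ^ m)
        = φ ((if n ∣ m then (n : ℂ) else 0) * c ^ m) := by
      rw [← map_sum]
      congr 1
      simp_rw [mul_pow, ← pow_mul, ← Finset.sum_mul]
      rw [sum_root_pow n hn m]
    rw [h1]
    by_cases hd : n ∣ m
    · rw [if_pos hd, if_pos hd, map_mul, map_natCast, mul_assoc]
    · rw [if_neg hd, if_neg hd, zero_mul, map_zero, zero_mul, mul_zero]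
  rw [funext inner] at total
  have total2 : HasSum (fun m => if n ∣ m then φ (c ^ m) * a m else 0)
      (((n : ℕ) : ℍ)⁻¹ * S) := by
    have := total.mul_left ((n : ℍ)⁻¹)
    simpa [← mul_assoc, inv_mul_cancel₀ hnH] using this
  -- reindex
  have hinj : Function.Injective (fun j : ℕ => n * j) := fun i j h => by
    simp only at h; exact Nat.eq_of_mul_eq_mul_left (by omega) h
  have total3 : HasSum (fun j => w ^ j * a (n * j)) (((n : ℕ) : ℍ)⁻¹ * S) := by
    have hsupp : ∀ m, m ∉ Set.range (fun j : ℕ => n * j) →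
        (if n ∣ m then φ (c ^ m) * a m else 0) = 0 := by
      intro m hm
      rw [if_neg]
      intro ⟨j, hj⟩
      exact hm ⟨j, hj.symm⟩
    have := (Function.Injective.hasSum_iff hinj hsupp).2 total2
    refine this.congr_fun fun j => ?_
    simp only [Function.comp]
    rw [if_pos (dvd_mul_right n j), pow_mul, map_pow, hc, hz]
  refine ⟨total3.summable, ?_⟩
  rw [total3.tsum_eq]
  -- the norm bound
  have hSlt : ‖S‖ < n := by
    calc ‖S‖ ≤ ∑ k ∈ Finset.range n, ‖f (φ (e ^ k * c))‖ := norm_sum_le _ _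
    _ < ∑ _k ∈ Finset.range n, (1 : ℝ) := by
        refine Finset.sum_lt_sum_of_nonempty ⟨0, Finset.mem_range.2 (by omega)⟩ ?_
        intro k _
        refine hlt _ (le_of_lt ?_)
        rw [hφ, norm_slice, norm_mul, norm_pow, he, one_pow, one_mul]
        exact hclt
    _ = n := by simp
  have hninv : ‖(((n : ℕ) : ℍ))⁻¹‖ = ((n : ℝ))⁻¹ := by
    rw [norm_inv]
    congr 1
    rw [← Quaternion.coe_natCast, Quaternion.norm_coe]
    exact abs_of_nonneg (by positivity)
  calc ‖(((n : ℕ) : ℍ))⁻¹ * S‖ = ((n : ℝ))⁻¹ * ‖S‖ := by rw [norm_mul, hninv]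
  _ < ((n : ℝ))⁻¹ * n := by
      have : (0:ℝ) < ((n : ℝ))⁻¹ := by positivity
      exact mul_lt_mul_of_pos_left hSlt this
  _ = 1 := inv_mul_cancel₀ hn0
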